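/- Let n ≥ 1, s ∈ 𝔽₂ⁿ, and O : 𝔽₂ⁿ → {−1,1}, and let ρ = |{x ∈ 𝔽₂ⁿ : O(x) ≠ (−1)^{⟨s,x⟩}}| / 2ⁿ. If ρ < 1/4, then Ô(s) = 1 − 2ρ > 1/2, and for every v ∈ 𝔽₂ⁿ with v ≠ s one has |Ô(v)| ≤ 2ρ < 1/2; in particular, s is the unique element v of 𝔽₂ⁿ with |Ô(v)| > 1/2. -/

import Mathlib

open scoped Classical

/-- Inner product `⟨v,x⟩ = Σ_j v_j·x_j` in `𝔽₂ⁿ`. -/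
def ip {n : ℕ} (v x : Fin n → ZMod 2) : ZMod 2 := ∑ j, v j * x j

/-- The Fourier (Walsh–Hadamard) transform on `𝔽₂ⁿ`:
`f̂(v) = 2^{−n} Σ_x f(x)·(−1)^{⟨v,x⟩}`. -/
noncomputable def wht {n : ℕ} (f : (Fin n → ZMod 2) → ℂ) (v : Fin n → ZMod 2) : ℂ :=
  ((2 : ℂ) ^ n)⁻¹ * ∑ x : Fin n → ZMod 2, f x * (-1 : ℂ) ^ (ip v x).val

lemma zmod2_vals : ((2:ZMod 2)).val = 0 ∧ ((1:ZMod 2)).val = 1 ∧ ((0:ZMod 2)).val = 0 := by decide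

lemma zmod2_pow_add (a b : ZMod 2) :
    (-1:ℂ)^(a+b).val = (-1:ℂ)^a.val * (-1:ℂ)^b.val := by
  rw [ZMod.val_add, ← pow_add, neg_one_pow_eq_pow_mod_two (a.val + b.val)]

lemma ip_add_left {n : ℕ} (s v x : Fin n → ZMod 2) :
    ip (s+v) x = ip s x + ip v x := by
  simp [ip, add_mul, Finset.sum_add_distrib]

lemma ip_add_right {n : ℕ} (w x y : Fin n → ZMod 2) :
    ip w (x+y) = ip w x + ip w y := by
  simp [ip, mul_add, Finset.sum_add_distrib]

lemma charsum {n : ℕ} (w : Fin n → ZMod 2) (hw : w ≠ 0) :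
    ∑ x : Fin n → ZMod 2, ((-1:ℂ) ^ (ip w x).val) = 0 := by
  obtain ⟨j, hj⟩ := Function.ne_iff.mp hw
  have hw1 : w j = 1 := by
    have : ∀ a : ZMod 2, a ≠ 0 → a = 1 := by decide
    exact this _ hj
  set e : Fin n → ZMod 2 := Pi.single j 1 with he
  have hipe : ip w e = 1 := by
    simp [ip, he, Pi.single_apply, mul_ite, hw1]
  have key : ∑ x : Fin n → ZMod 2, ((-1:ℂ) ^ (ip w x).val)
      = -∑ x : Fin n → ZMod 2, ((-1:ℂ) ^ (ip w x).val) := by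
    conv_lhs => rw [← Equiv.sum_comp (Equiv.addRight e) (fun x => ((-1:ℂ) ^ (ip w x).val))]
    simp only [Equiv.coe_addRight]
    rw [← Finset.sum_neg_distrib]
    refine Finset.sum_congr rfl fun x _ => ?_
    rw [ip_add_right, hipe, zmod2_pow_add]
    norm_num [zmod2_vals.2.1]
  have h2 : (2:ℂ) * ∑ x : Fin n → ZMod 2, ((-1:ℂ) ^ (ip w x).val) = 0 := by
    linear_combination key
  simpa using h2

/-- Goldreich–Levin uniqueness: if `O : 𝔽₂ⁿ → {−1,1}` disagrees with the character
`x ↦ (−1)^{⟨s,x⟩}` on a fraction `ρ < 1/4` of inputs, then `Ô(s) = 1 − 2ρ > 1/2`,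
`|Ô(v)| ≤ 2ρ < 1/2` for every `v ≠ s`, and `s` is the unique `v` with `|Ô(v)| > 1/2`. -/
theorem stmt8 (n : ℕ) (hn : 1 ≤ n) (s : Fin n → ZMod 2)
    (O : (Fin n → ZMod 2) → ℂ) (hO : ∀ x, O x = 1 ∨ O x = -1)
    (ρ : ℝ)
    (hρdef : ρ = ((Finset.univ.filter fun x : Fin n → ZMod 2 =>
        O x ≠ (-1 : ℂ) ^ (ip s x).val).card : ℝ) / (2 : ℝ) ^ n)
    (hρ : ρ < 1 / 4) :
    wht O s = ((1 - 2 * ρ : ℝ) : ℂ)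
    ∧ 1 / 2 < 1 - 2 * ρ
    ∧ (∀ v : Fin n → ZMod 2, v ≠ s → ‖wht O v‖ ≤ 2 * ρ)
    ∧ 2 * ρ < 1 / 2
    ∧ ∀ v : Fin n → ZMod 2, 1 / 2 < ‖wht O v‖ → v = s := by
  set χ : (Fin n → ZMod 2) → ℂ := fun x => (-1:ℂ) ^ (ip s x).val with hχdef
  set D : Finset (Fin n → ZMod 2) :=
    Finset.univ.filter (fun x => O x ≠ (-1:ℂ) ^ (ip s x).val) with hD
  have hχpm : ∀ x, χ x = 1 ∨ χ x = -1 := by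
    intro x
    rcases Nat.even_or_odd (ip s x).val with h | h
    · left; exact h.neg_one_pow
    · right; exact h.neg_one_pow
  have hcardtot : (Fintype.card (Fin n → ZMod 2)) = 2 ^ n := by
    simp [ZMod.card]
  have hρ0 : 0 ≤ ρ := by
    rw [hρdef]
    positivity
  -- Part 1
  have hsum1 : ∑ x : Fin n → ZMod 2, O x * χ x
      = (2:ℂ)^n - 2 * (D.card : ℂ) := by
    have : ∀ x : Fin n → ZMod 2, O x * χ x = if x ∈ D then (-1:ℂ) else 1 := by
      intro x
      by_cases hx : x ∈ D
      · have hne : O x ≠ χ x := by simpa [hD, hχdef] using hx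
        rcases hO x with h1 | h1 <;> rcases hχpm x with h2 | h2 <;>
          simp [h1, h2, hx] at hne ⊢ <;> norm_num
      · have heq : O x = χ x := by
          have := hx
          simp only [hD, Finset.mem_filter, Finset.mem_univ, true_and, not_not] at this
          simpa [hχdef] using this
        rw [heq]
        rcases hχpm x with h2 | h2 <;> simp [h2, hx]
    rw [Finset.sum_congr rfl fun x _ => this x]
    have h2 : (∑ x : Fin n → ZMod 2, if x ∈ D then (-1:ℂ) else 1)
        = ∑ x : Fin n → ZMod 2, ((1:ℂ) - if x ∈ D then (2:ℂ) else 0) := by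
      refine Finset.sum_congr rfl fun x _ => ?_
      by_cases hx : x ∈ D <;> simp [hx] <;> ring
    rw [h2, Finset.sum_sub_distrib, Finset.sum_ite_mem, Finset.univ_inter]
    simp [Finset.card_univ, hcardtot, mul_comm]
  have part1 : wht O s = ((1 - 2 * ρ : ℝ) : ℂ) := by
    rw [wht]
    have : ∑ x : Fin n → ZMod 2, O x * (-1:ℂ) ^ (ip s x).val
        = (2:ℂ)^n - 2 * (D.card : ℂ) := hsum1
    rw [this, hρdef]
    have h2n : ((2:ℂ)^n) ≠ 0 := pow_ne_zero _ two_ne_zero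
    push_cast
    field_simp
  have part3 : ∀ v : Fin n → ZMod 2, v ≠ s → ‖wht O v‖ ≤ 2 * ρ := by
    intro v hv
    set χv : (Fin n → ZMod 2) → ℂ := fun x => (-1:ℂ) ^ (ip v x).val with hχv
    have hwne : s + v ≠ 0 := by
      intro h
      apply hv
      funext j
      have hj : s j + v j = 0 := congrFun h j
      have : ∀ a b : ZMod 2, a + b = 0 → b = a := by decide
      exact this _ _ hj
    have horth : ∑ x : Fin n → ZMod 2, χ x * χv x = 0 := by
      have := charsum (s + v) hwne
      rw [← this]
      refine Finset.sum_congr rfl fun x _ => ?_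
      rw [hχdef, hχv, ip_add_left, zmod2_pow_add]
    have hsplit : ∑ x : Fin n → ZMod 2, O x * χv x
        = ∑ x ∈ D, (O x - χ x) * χv x := by
      have : ∑ x : Fin n → ZMod 2, O x * χv x
          = ∑ x : Fin n → ZMod 2, ((O x - χ x) * χv x) + ∑ x : Fin n → ZMod 2, χ x * χv x := by
        rw [← Finset.sum_add_distrib]
        refine Finset.sum_congr rfl fun x _ => ?_
        ring
      rw [this, horth, add_zero]
      refine (Finset.sum_subset D.subset_univ fun x _ hx => ?_).symm
      have heq : O x = χ x := by
        simp only [hD, Finset.mem_filter, Finset.mem_univ, true_and, not_not] at hx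
        simpa [hχdef] using hx
      rw [heq, sub_self, zero_mul]
    have hχv1 : ∀ x, ‖χv x‖ = 1 := by
      intro x
      rw [hχv]
      simp [map_pow]
    have hterm : ∀ x ∈ D, ‖(O x - χ x) * χv x‖ ≤ 2 := by
      intro x _
      rw [norm_mul, hχv1, mul_one]
      calc ‖O x - χ x‖ ≤ ‖O x‖ + ‖χ x‖ := by
            simpa using norm_sub_le (O x) (χ x)
        _ ≤ 2 := by
            rcases hO x with h1 | h1 <;> rcases hχpm x with h2 | h2 <;>
              rw [h1, h2] <;> norm_num
    have hbound : ‖∑ x ∈ D, (O x - χ x) * χv x‖ ≤ 2 * D.card := by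
      calc ‖∑ x ∈ D, (O x - χ x) * χv x‖
          ≤ ∑ x ∈ D, ‖(O x - χ x) * χv x‖ := by
            simpa using
              norm_sum_le D (fun x => (O x - χ x) * χv x)
        _ ≤ ∑ x ∈ D, (2:ℝ) := Finset.sum_le_sum hterm
        _ = 2 * D.card := by simp [mul_comm]
    rw [wht, norm_mul]
    have habs2 : ‖((2:ℂ)^n)⁻¹‖ = ((2:ℝ)^n)⁻¹ := by
      simp [map_inv₀, map_pow]
    rw [habs2]
    have : ‖∑ x : Fin n → ZMod 2, O x * (-1:ℂ) ^ (ip v x).val‖ ≤ 2 * D.card := by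
      rw [show (∑ x : Fin n → ZMod 2, O x * (-1:ℂ) ^ (ip v x).val)
          = ∑ x : Fin n → ZMod 2, O x * χv x from rfl, hsplit]
      exact hbound
    have h2n : (0:ℝ) < (2:ℝ)^n := by positivity
    rw [hρdef]
    calc ((2:ℝ)^n)⁻¹ * ‖∑ x : Fin n → ZMod 2, O x * (-1:ℂ) ^ (ip v x).val‖
        ≤ ((2:ℝ)^n)⁻¹ * (2 * D.card) := by
          exact mul_le_mul_of_nonneg_left this (by positivity)
      _ = 2 * ((D.card : ℝ) / (2:ℝ)^n) := by rw [div_eq_mul_inv]; ring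
  refine ⟨part1, by linarith, part3, by linarith, ?_⟩
  intro v hv
  by_contra hne
  have := part3 v hne
  linarith
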